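/- (Vectorial plateaued construction) Let p be a prime, r ≥ 1, m ≥ 3, 0 ≤ s ≤ r (r+s even if p=2), {α_0,...,α_{m−1}} a basis of 𝔽_{p^m} over 𝔽_p, f_0,...,f_{p−1} : V_r → 𝔽_p s-plateaued functions, and G a permutation of 𝔽_{p^m} with G(0)=0. Define h_i(x, y₁, y₂) = f_{Tr(α_0 G(y₁ y₂^{p^m−2}))}(x) + Tr(α_i G(y₁ y₂^{p^m−2})) for 1 ≤ i ≤ m−1. Then for every nonzero (a_1,...,a_{m−1}) ∈ 𝔽_p^{m−1}, the function ∑_i a_i h_i is an s-plateaued function if ∑ a_i ≠ 0, and an r-plateaued function if ∑ a_i = 0. -/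

import Mathlib

/-- The complex primitive `m`-th root of unity `e^{2πi/m}`. -/
noncomputable def zeta (m : ℕ) : ℂ := Complex.exp (2 * Real.pi * Complex.I / m)

/-- Inner product on `(ZMod p)^n`. -/
def dot {p n : ℕ} (a x : Fin n → ZMod p) : ZMod p := ∑ i, a i * x i

/-- Walsh transform of a generalized p-ary function `f : (ZMod p)^n → ZMod (p^k)`. -/
noncomputable def walsh (p n k : ℕ) [Fact (Nat.Prime p)]
    (f : (Fin n → ZMod p) → ZMod (p ^ k)) (a : Fin n → ZMod p) : ℂ :=
  ∑ x : Fin n → ZMod p, zeta (p ^ k) ^ (f x).val * zeta p ^ ((-(dot a x)).val)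

/-- Walsh transform of a p-ary function on `(ZMod p)^r × F × F`. -/
noncomputable def walshRF (p r : ℕ) [Fact (Nat.Prime p)]
    (F : Type) [Field F] [Fintype F] [Algebra (ZMod p) F]
    (h : (Fin r → ZMod p) × F × F → ZMod p) (a : (Fin r → ZMod p) × F × F) : ℂ :=
  ∑ x : (Fin r → ZMod p) × F × F,
    zeta p ^ ((h x - dot a.1 x.1 - Algebra.trace (ZMod p) F (a.2.1 * x.2.1) -
      Algebra.trace (ZMod p) F (a.2.2 * x.2.2)).val)

/-- Walsh transform of a p-ary function on `(ZMod p)^r`. -/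
noncomputable def walshP (p r : ℕ) [Fact (Nat.Prime p)]
    (f : (Fin r → ZMod p) → ZMod p) (b : Fin r → ZMod p) : ℂ :=
  ∑ x : Fin r → ZMod p, zeta p ^ ((f x - dot b x).val)

open Finset
open scoped Classical

section Aux
variable {p : ℕ} [hp : Fact p.Prime]

lemma zeta_prim : IsPrimitiveRoot (zeta p) p :=
  Complex.isPrimitiveRoot_exp p hp.out.ne_zero

omit hp in
lemma abs_zeta : ‖zeta p‖ = 1 := by
  unfold zeta
  rw [show (2*Real.pi*Complex.I/(p:ℂ)) = ((2*Real.pi/p : ℝ))*Complex.I by push_cast; ring,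
    Complex.norm_exp]
  simp [Complex.re_ofReal_mul]

omit hp in
lemma sum_addchar_eq_zero {A : Type*} [AddCommGroup A] [Fintype A] (φ : AddChar A ℂ)
    (u : A) (hu : φ u ≠ 1) : ∑ a, φ a = 0 := by
  have h1 : ∑ a, φ a = ∑ a, φ (a + u) := (Equiv.sum_comp (Equiv.addRight u) φ).symm
  have h2 : ∑ a, φ (a + u) = (∑ a, φ a) * φ u := by
    rw [Finset.sum_mul]; exact Finset.sum_congr rfl fun a _ => by rw [AddChar.map_add_eq_mul]
  have h3 : (∑ a, φ a) * 1 = (∑ a, φ a) * φ u := by rw [mul_one, ← h2, ← h1]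
  by_contra hS
  exact hu (mul_left_cancel₀ hS h3).symm

variable {η : ℂ}

lemma zmodChar_ne_one (hη : IsPrimitiveRoot η p) {t : ZMod p} (ht : t ≠ 0) :
    AddChar.zmodChar p hη.pow_eq_one t ≠ 1 := by
  rw [AddChar.zmodChar_apply]
  exact hη.pow_ne_one_of_pos_of_lt (fun h => ht (by
    rwa [ZMod.val_eq_zero] at h)) (ZMod.val_lt t)

lemma zmodChar_mul (hη1 : η ^ p = 1) (ε u : ZMod p) :
    AddChar.zmodChar p hη1 (ε * u) = (η ^ ε.val) ^ u.val := by
  rw [AddChar.zmodChar_apply, ← pow_mul, ZMod.val_mul, ← pow_eq_pow_mod _ hη1]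

lemma sum_mul_char (hη : IsPrimitiveRoot η p) (u : ZMod p) :
    ∑ t : ZMod p, AddChar.zmodChar p hη.pow_eq_one (t * u) = if u = 0 then (p : ℂ) else 0 := by
  split_ifs with hu
  · subst hu; simp [AddChar.zmodChar_apply, ZMod.card]
  · set χ := AddChar.zmodChar p hη.pow_eq_one
    have : ∑ t : ZMod p, χ (t * u) =
        ∑ t : ZMod p, (χ.compAddMonoidHom (AddMonoidHom.mulRight u)) t := rfl
    rw [this]
    refine sum_addchar_eq_zero _ u⁻¹ ?_
    simp only [AddChar.compAddMonoidHom_apply, AddMonoidHom.coe_mulRight]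
    rw [inv_mul_cancel₀ hu]
    simpa using zmodChar_ne_one hη (one_ne_zero (α := ZMod p))

lemma trace_nondeg (F : Type) [Field F] [Fintype F] [Algebra (ZMod p) F]
    {w : F} (hw : w ≠ 0) : ∃ y : F, Algebra.trace (ZMod p) F (w * y) ≠ 0 := by
  have : Module.Finite (ZMod p) F := Module.Finite.of_finite
  have htr := (traceForm_nondegenerate (ZMod p) F).1 w
  simp_rw [Algebra.traceForm_apply] at htr
  by_contra! hf
  exact hw (htr hf)

/-- L2 -/
lemma sum_trace_char (hη : IsPrimitiveRoot η p)
    (F : Type) [Field F] [Fintype F] [Algebra (ZMod p) F] (w : F) :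
    ∑ y : F, AddChar.zmodChar p hη.pow_eq_one (Algebra.trace (ZMod p) F (w * y)) =
      if w = 0 then (Fintype.card F : ℂ) else 0 := by
  set χ := AddChar.zmodChar p hη.pow_eq_one
  split_ifs with hw
  · subst hw
    have : ∀ y : F, Algebra.trace (ZMod p) F ((0:F) * y) = 0 := by
      intro y; rw [zero_mul, map_zero]
    simp_rw [this, AddChar.map_zero_eq_one]
    simp [Finset.card_univ]
  · obtain ⟨y₀, hy₀⟩ := trace_nondeg (p := p) F hw
    set D : F →+ ZMod p :=
      ((Algebra.trace (ZMod p) F).toAddMonoidHom.comp (AddMonoidHom.mulLeft w))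
    have : ∑ y : F, χ (Algebra.trace (ZMod p) F (w * y)) =
        ∑ y : F, (χ.compAddMonoidHom D) y := rfl
    rw [this]
    refine sum_addchar_eq_zero _ y₀ ?_
    exact zmodChar_ne_one hη hy₀


/-- L3: the `T = 0` vanishing lemma. -/
lemma key_vanish (hη : IsPrimitiveRoot η p)
    (F : Type) [Field F] [Fintype F] [Algebra (ZMod p) F]
    {A B : F} (hind : ∀ t : ZMod p, t • A + B ≠ 0) (g : ZMod p → ℂ) :
    ∑ w : F, AddChar.zmodChar p hη.pow_eq_one (Algebra.trace (ZMod p) F (B * w)) *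
      g (Algebra.trace (ZMod p) F (A * w)) = 0 := by
  set χ := AddChar.zmodChar p hη.pow_eq_one with hχ
  set T := Algebra.trace (ZMod p) F with hT
  have hp0 : (p:ℂ) ≠ 0 := Nat.cast_ne_zero.mpr hp.out.ne_zero
  have hdelta : ∀ c₀ : ZMod p,
      (p:ℂ) * g c₀ = ∑ c : ZMod p, g c * ∑ t : ZMod p, χ (t * (c₀ - c)) := by
    intro c₀
    have h1 : ∀ c : ZMod p, g c * ∑ t : ZMod p, χ (t * (c₀ - c)) =
        if c = c₀ then g c * p else 0 := by
      intro c
      rw [hχ, sum_mul_char hη]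
      by_cases h : c = c₀
      · simp [h]
      · rw [if_neg (fun hc => h (by
          have := sub_eq_zero.mp hc; exact this.symm)), if_neg h, mul_zero]
    rw [Finset.sum_congr rfl fun c _ => h1 c, Finset.sum_ite_eq' univ c₀ (fun c => g c * p)]
    simp [mul_comm]
  have main : ∀ c t : ZMod p,
      ∑ w : F, χ (T (B * w)) * (g c * χ (t * (T (A * w) - c))) = 0 := by
    intro c t
    have h1 : ∀ w : F, χ (T (B*w)) * (g c * χ (t * (T (A*w) - c))) =
        (g c * χ (-(t*c))) * χ (T ((t • A + B) * w)) := by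
      intro w
      have e1 : t * (T (A*w) - c) = (t * T (A*w)) + (-(t*c)) := by ring
      have e2 : t * T (A*w) = T ((t • A) * w) := by
        rw [smul_mul_assoc, hT, map_smul, smul_eq_mul]
      have e3 : T ((t•A+B)*w) = T ((t•A)*w) + T (B*w) := by rw [add_mul, hT, map_add]
      rw [e1, AddChar.map_add_eq_mul, e2, e3, AddChar.map_add_eq_mul]
      ring
    rw [Finset.sum_congr rfl fun w _ => h1 w, ← Finset.mul_sum]
    have hz := sum_trace_char hη F (t • A + B)
    rw [if_neg (hind t)] at hz
    rw [← hT, ← hχ] at hz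
    rw [hz, mul_zero]
  have calc1 : (p:ℂ) * ∑ w : F, χ (T (B*w)) * g (T (A*w)) = 0 := by
    calc (p:ℂ) * ∑ w : F, χ (T (B*w)) * g (T (A*w))
        = ∑ w : F, χ (T (B*w)) * ((p:ℂ) * g (T (A*w))) := by
          rw [Finset.mul_sum]; exact Finset.sum_congr rfl fun w _ => by ring
      _ = ∑ w : F, χ (T (B*w)) * ∑ c : ZMod p, g c * ∑ t : ZMod p, χ (t * (T (A*w) - c)) :=
          Finset.sum_congr rfl fun w _ => by rw [← hdelta]
      _ = ∑ w : F, ∑ c : ZMod p, ∑ t : ZMod p, χ (T (B*w)) * (g c * χ (t * (T (A*w) - c))) := by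
          refine Finset.sum_congr rfl fun w _ => ?_
          rw [Finset.mul_sum]
          exact Finset.sum_congr rfl fun c _ => by rw [Finset.mul_sum, Finset.mul_sum]
      _ = ∑ c : ZMod p, ∑ t : ZMod p, ∑ w : F, χ (T (B*w)) * (g c * χ (t * (T (A*w) - c))) := by
          rw [Finset.sum_comm]
          exact Finset.sum_congr rfl fun c _ => Finset.sum_comm
      _ = 0 := by
          rw [Finset.sum_congr rfl fun c _ => Finset.sum_congr rfl fun t _ => main c t]
          simp
  rcases mul_eq_zero.mp calc1 with h | h
  · exact absurd h hp0
  · exact h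

/-- number of pairs with given difference -/
noncomputable def Ncount {p : ℕ} {X : Type*} [Fintype X] (g : X → ZMod p) (t : ZMod p) : ℕ :=
  (univ.filter (fun q : X × X => g q.1 - g q.2 = t)).card

lemma abs_eta (hη : IsPrimitiveRoot η p) : ‖η‖ = 1 := by
  have h := congrArg (‖·‖) hη.pow_eq_one
  rw [norm_pow, norm_one] at h
  have h2 : ‖η‖ ^ p = 1 ^ p := by rw [h, one_pow]
  exact (pow_left_inj₀ (norm_nonneg η) zero_le_one hp.out.ne_zero).mp h2

lemma abs_sq_eq (hη : IsPrimitiveRoot η p) {X : Type*} [Fintype X] (g : X → ZMod p) :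
    ((‖∑ x : X, η ^ (g x).val‖ : ℝ) : ℂ)^2 =
      ∑ t : ZMod p, (Ncount g t : ℂ) * η ^ t.val := by
  set χ := AddChar.zmodChar p hη.pow_eq_one with hχ
  have hχa : ∀ a : ZMod p, χ a = η ^ a.val := fun a => AddChar.zmodChar_apply _ a
  have habs : ∀ a : ZMod p, ‖χ a‖ = 1 := by
    intro a; rw [hχa, norm_pow, abs_eta hη, one_pow]
  have hne : ∀ a : ZMod p, χ a ≠ 0 := fun a h => by
    have := habs a; rw [h] at this; simp at this
  have hconj : ∀ a : ZMod p, (starRingEnd ℂ) (χ a) = χ (-a) := by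
    intro a
    have h1 : χ (-a) * χ a = 1 := by
      rw [← AddChar.map_add_eq_mul]; simp
    have h2 : (starRingEnd ℂ) (χ a) * χ a = 1 := by
      rw [mul_comm, Complex.mul_conj, ← Complex.sq_norm, habs]
      norm_num
    exact mul_right_cancel₀ (hne a) (h2.trans h1.symm)
  set S := ∑ x : X, η ^ (g x).val with hS
  have hSχ : S = ∑ x : X, χ (g x) := Finset.sum_congr rfl fun x _ => (hχa _).symm
  have h0 : ((‖S‖ : ℝ) : ℂ)^2 = S * (starRingEnd ℂ) S := by
    rw [Complex.mul_conj, ← Complex.sq_norm]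
    push_cast
    ring
  rw [h0, hSχ, map_sum]
  have hconjS : ∑ x : X, (starRingEnd ℂ) (χ (g x)) = ∑ x : X, χ (-(g x)) :=
    Finset.sum_congr rfl fun x _ => hconj _
  rw [hconjS, Finset.sum_mul_sum]
  have hsum : ∑ x : X, ∑ y : X, χ (g x) * χ (-(g y)) =
      ∑ q : X × X, χ (g q.1 - g q.2) := by
    rw [Fintype.sum_prod_type]
    exact Finset.sum_congr rfl fun x _ => Finset.sum_congr rfl fun y _ => by
      rw [← AddChar.map_add_eq_mul, sub_eq_add_neg]
  rw [hsum, ← Finset.sum_fiberwise univ (fun q : X × X => g q.1 - g q.2)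
    (fun q => χ (g q.1 - g q.2))]
  refine Finset.sum_congr rfl fun t _ => ?_
  have : ∀ q ∈ univ.filter (fun q : X × X => g q.1 - g q.2 = t),
      χ (g q.1 - g q.2) = χ t := by
    intro q hq; rw [(Finset.mem_filter.mp hq).2]
  rw [Finset.sum_congr rfl this, Finset.sum_const, nsmul_eq_mul, Ncount, hχa]

lemma root_transfer {η₁ η₂ : ℂ} (hζ : IsPrimitiveRoot η₁ p) (hω : IsPrimitiveRoot η₂ p)
    (c : ZMod p → ℕ) (v : ℕ)
    (h : ∑ t : ZMod p, (c t : ℂ) * η₁ ^ t.val = (v : ℂ)) :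
    ∑ t : ZMod p, (c t : ℂ) * η₂ ^ t.val = (v : ℂ) := by
  haveI : NeZero ((p : ℕ) : ℂ) := ⟨Nat.cast_ne_zero.mpr hp.out.ne_zero⟩
  set Q : Polynomial ℚ :=
    (∑ t : ZMod p, Polynomial.C ((c t : ℚ)) * Polynomial.X ^ (t.val)) - Polynomial.C (v : ℚ)
    with hQ
  have heval : ∀ μ : ℂ, Polynomial.aeval μ Q = ∑ t : ZMod p, (c t : ℂ) * μ ^ t.val - v := by
    intro μ
    rw [hQ, map_sub, map_sum]
    simp [Polynomial.aeval_C]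
  have h1 : Polynomial.aeval η₁ Q = 0 := by rw [heval, h, sub_self]
  have hdvd : Polynomial.cyclotomic p ℚ ∣ Q := by
    rw [Polynomial.cyclotomic_eq_minpoly_rat hζ hp.out.pos]
    exact minpoly.dvd ℚ η₁ h1
  obtain ⟨R, hR⟩ := hdvd
  have h2 : Polynomial.aeval η₂ Q = 0 := by
    rw [hR, map_mul]
    have hc : Polynomial.aeval η₂ (Polynomial.cyclotomic p ℚ) = 0 := by
      have hroot : Polynomial.IsRoot (Polynomial.cyclotomic p ℂ) η₂ :=
        (Polynomial.isRoot_cyclotomic_iff).mpr hω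
      rw [Polynomial.aeval_def, ← Polynomial.eval_map, Polynomial.map_cyclotomic]
      exact hroot
    rw [hc, zero_mul]
  rw [heval] at h2
  exact sub_eq_zero.mp h2

lemma plateau_transfer {X : Type*} [Fintype X] {η₁ η₂ : ℂ} (hζ : IsPrimitiveRoot η₁ p)
    (hω : IsPrimitiveRoot η₂ p) (g : X → ZMod p) (v : ℕ)
    (hv : (‖∑ x : X, η₁ ^ (g x).val‖)^2 = (v : ℝ)) :
    (‖∑ x : X, η₂ ^ (g x).val‖)^2 = (v : ℝ) := by
  have e1 := abs_sq_eq hζ g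
  have e2 := abs_sq_eq hω g
  have h1 : ∑ t : ZMod p, (Ncount g t : ℂ) * η₁ ^ t.val = (v : ℂ) := by
    rw [← e1]; exact_mod_cast congrArg (fun x : ℝ => (x : ℂ)) hv
  have h2 := root_transfer hζ hω (Ncount g) v h1
  rw [h2] at e2
  exact_mod_cast e2

lemma abs_zmodChar (hη : IsPrimitiveRoot η p) (a : ZMod p) :
    ‖AddChar.zmodChar p hη.pow_eq_one a‖ = 1 := by
  rw [AddChar.zmodChar_apply, norm_pow, abs_eta hη, one_pow]

end Aux

open Finset in
lemma master_lemma {p r m : ℕ} [hp : Fact p.Prime] (hm : 3 ≤ m)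
    (F : Type) [Field F] [Fintype F] [Algebra (ZMod p) F]
    (hcard : Fintype.card F = p ^ m)
    (G : Equiv.Perm F) (hG0 : G 0 = 0)
    (fc : ZMod p → (Fin r → ZMod p) → ZMod p)
    (A₀ B : F) (hind : ∀ t : ZMod p, t • A₀ + B ≠ 0)
    (b₀ : Fin r → ZMod p) (b₁ b₂ : F) :
    ∃ c : ZMod p, ‖(∑ x : (Fin r → ZMod p) × F × F,
        zeta p ^ ((fc (Algebra.trace (ZMod p) F (A₀ * G (x.2.1 * x.2.2 ^ (p^m - 2)))) x.1
          + Algebra.trace (ZMod p) F (B * G (x.2.1 * x.2.2 ^ (p^m - 2)))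
          - dot b₀ x.1 - Algebra.trace (ZMod p) F (b₁ * x.2.1)
          - Algebra.trace (ZMod p) F (b₂ * x.2.2)).val))‖ =
      (p:ℝ)^m * ‖∑ x : Fin r → ZMod p, zeta p ^ ((fc c x - dot b₀ x).val)‖ := by
  have hζ : IsPrimitiveRoot (zeta p) p := zeta_prim
  set χ := AddChar.zmodChar p hζ.pow_eq_one with hχdef
  set T := Algebra.trace (ZMod p) F with hTdef
  have hq8 : 8 ≤ p ^ m := by
    calc (8:ℕ) = 2^3 := by norm_num
    _ ≤ 2^m := Nat.pow_le_pow_right (by norm_num) hm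
    _ ≤ p^m := Nat.pow_le_pow_left hp.out.two_le m
  have hcast : ∀ A : ZMod p, zeta p ^ A.val = χ A := fun A => (AddChar.zmodChar_apply _ A).symm
  set S : ZMod p → ℂ := fun c => ∑ x : Fin r → ZMod p, χ (fc c x - dot b₀ x) with hSdef
  set C : F → ℂ := fun z => χ (T (B * G z)) * S (T (A₀ * G z)) with hCdef
  set yy : F → F → ZMod p := fun y₁ y₂ =>
    T (B * G (y₁ * y₂ ^ (p^m - 2))) - T (b₁ * y₁) - T (b₂ * y₂) with hyy
  set cc : F → F → ZMod p := fun y₁ y₂ => T (A₀ * G (y₁ * y₂ ^ (p^m - 2))) with hcc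
  -- Step 1 : Fubini
  have step1 : (∑ x : (Fin r → ZMod p) × F × F,
      zeta p ^ ((fc (T (A₀ * G (x.2.1 * x.2.2 ^ (p^m - 2)))) x.1
        + T (B * G (x.2.1 * x.2.2 ^ (p^m - 2)))
        - dot b₀ x.1 - T (b₁ * x.2.1) - T (b₂ * x.2.2)).val)) =
      ∑ y : F × F, χ (yy y.1 y.2) * S (cc y.1 y.2) := by
    have e0 : ∀ x : (Fin r → ZMod p) × F × F,
        zeta p ^ ((fc (T (A₀ * G (x.2.1 * x.2.2 ^ (p^m - 2)))) x.1
          + T (B * G (x.2.1 * x.2.2 ^ (p^m - 2)))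
          - dot b₀ x.1 - T (b₁ * x.2.1) - T (b₂ * x.2.2)).val) =
        χ (fc (cc x.2.1 x.2.2) x.1 - dot b₀ x.1) * χ (yy x.2.1 x.2.2) := by
      intro x
      rw [hcast, ← AddChar.map_add_eq_mul]
      congr 1
      simp only [hyy, hcc]
      ring
    rw [Finset.sum_congr rfl fun x _ => e0 x, Fintype.sum_prod_type_right]
    refine Finset.sum_congr rfl fun y _ => ?_
    dsimp only
    rw [← Finset.sum_mul, mul_comm]
  rw [step1, Fintype.sum_prod_type_right]
  -- Step 2 : split off y₂ = 0
  rw [← Finset.sum_erase_add univ _ (mem_univ (0:F))]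
  -- the y₂ = 0 term
  have h00 : (∑ y₁ : F, χ (yy y₁ 0) * S (cc y₁ 0)) =
      (if b₁ = 0 then ((Fintype.card F : ℕ):ℂ) else 0) * S 0 := by
    have hyy0 : ∀ y₁ : F, yy y₁ 0 = T ((-b₁) * y₁) := by
      intro y₁
      simp only [hyy, zero_pow (show p^m-2 ≠ 0 by omega), mul_zero, hG0, map_zero, neg_mul]
      rw [hTdef, map_neg]
      ring
    have hcc0 : ∀ y₁ : F, cc y₁ 0 = 0 := by
      intro y₁
      simp only [hcc, zero_pow (show p^m-2 ≠ 0 by omega), mul_zero, hG0, map_zero]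
    simp only [hyy0, hcc0]
    rw [← Finset.sum_mul]
    congr 1
    rw [hχdef, hTdef, sum_trace_char hζ F (-b₁)]
    simp [neg_eq_zero]
  rw [h00]
  -- the y₂ ≠ 0 part
  have hy2 : ∀ y₂ ∈ univ.erase (0:F), (∑ y₁ : F, χ (yy y₁ y₂) * S (cc y₁ y₂)) =
      ∑ z : F, C z * χ (T ((-(b₁ * z + b₂)) * y₂)) := by
    intro y₂ hy₂
    have h0 : y₂ ≠ 0 := Finset.ne_of_mem_erase hy₂
    have hre := Equiv.sum_comp (Equiv.mulRight₀ y₂ h0)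
      (fun y₁ => χ (yy y₁ y₂) * S (cc y₁ y₂))
    rw [← hre]
    refine Finset.sum_congr rfl fun z _ => ?_
    have hz : (z * y₂) * y₂ ^ (p^m - 2) = z := by
      rw [mul_assoc, ← pow_succ', show p^m - 2 + 1 = p^m - 1 by omega]
      have := FiniteField.pow_card_sub_one_eq_one y₂ h0
      rw [hcard] at this
      rw [this, mul_one]
    have heq : Equiv.mulRight₀ y₂ h0 z = z * y₂ := rfl
    rw [heq]
    have hyyz : yy (z * y₂) y₂ = T (B * G z) + T ((-(b₁ * z + b₂)) * y₂) := by
      simp only [hyy, hz]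
      have h1 : T ((-(b₁*z+b₂)) * y₂) = - (T (b₁*(z*y₂)) + T (b₂*y₂)) := by
        rw [hTdef, ← map_add, ← map_neg]
        congr 1
        ring
      rw [h1]
      ring
    have hccz : cc (z * y₂) y₂ = T (A₀ * G z) := by simp only [hcc, hz]
    rw [hyyz, hccz, AddChar.map_add_eq_mul, hCdef]
    ring
  rw [Finset.sum_congr rfl hy2]
  -- swap sums and compute inner sums over y₂
  rw [Finset.sum_comm]
  have hinner : ∀ z : F, (∑ y₂ ∈ univ.erase (0:F), C z * χ (T ((-(b₁ * z + b₂)) * y₂))) =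
      C z * ((if -(b₁ * z + b₂) = 0 then ((Fintype.card F : ℕ):ℂ) else 0) - 1) := by
    intro z
    rw [← Finset.mul_sum]
    congr 1
    rw [Finset.sum_erase_eq_sub (mem_univ (0:F))]
    have h2 : χ (T (-(b₁ * z + b₂) * 0)) = 1 := by
      rw [mul_zero, map_zero, AddChar.map_zero_eq_one]
    rw [h2]
    congr 1
    rw [hχdef, hTdef]
    exact sum_trace_char hζ F (-(b₁ * z + b₂))
  rw [Finset.sum_congr rfl fun z _ => hinner z]
  have hC0 : ∑ z : F, C z = 0 := by
    have hre := Equiv.sum_comp (G : F ≃ F) (fun w => χ (T (B * w)) * S (T (A₀ * w)))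
    have : ∑ z : F, C z = ∑ w : F, χ (T (B * w)) * S (T (A₀ * w)) := by
      rw [← hre]
    rw [this, hχdef, hTdef]
    exact key_vanish hζ F hind S
  have hsplit : (∑ z : F, C z * ((if -(b₁ * z + b₂) = 0 then ((Fintype.card F : ℕ):ℂ) else 0) - 1))
      = ∑ z : F, C z * (if -(b₁ * z + b₂) = 0 then ((Fintype.card F : ℕ):ℂ) else 0) := by
    simp only [mul_sub, mul_one]
    rw [Finset.sum_sub_distrib, hC0, sub_zero]
  rw [hsplit]
  -- case analysis
  by_cases hb₁ : b₁ = 0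
  · subst hb₁
    by_cases hb₂ : b₂ = 0
    · subst hb₂
      have hone : ∀ z : F, C z * (if -((0:F) * z + 0) = 0 then ((Fintype.card F : ℕ):ℂ) else 0) =
          C z * ((Fintype.card F : ℕ):ℂ) := by
        intro z; norm_num
      rw [Finset.sum_congr rfl fun z _ => hone z, ← Finset.sum_mul, hC0, zero_mul, zero_add,
        if_pos rfl]
      refine ⟨0, ?_⟩
      rw [norm_mul, Complex.norm_natCast, hcard]
      simp only [hSdef, hcast]
      push_cast
      ring
    · have hzero : ∀ z : F, C z * (if -((0:F) * z + b₂) = 0 then ((Fintype.card F : ℕ):ℂ) else 0)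
          = 0 := by
        intro z
        rw [if_neg (by simp [hb₂]), mul_zero]
      rw [Finset.sum_congr rfl fun z _ => hzero z, Finset.sum_const_zero, zero_add, if_pos rfl]
      refine ⟨0, ?_⟩
      rw [norm_mul, Complex.norm_natCast, hcard]
      simp only [hSdef, hcast]
      push_cast
      ring
  · -- b₁ ≠ 0 : unique z₀
    set z₀ : F := b₁⁻¹ * (-b₂) with hz₀
    have hcond : ∀ z : F, (-(b₁ * z + b₂) = 0) ↔ z = z₀ := by
      intro z
      rw [neg_eq_zero, hz₀]
      constructor
      · intro h
        have hbz : b₁ * z = -b₂ := by linear_combination h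
        rw [← hbz, ← mul_assoc, inv_mul_cancel₀ hb₁, one_mul]
      · intro h
        subst h
        rw [← mul_assoc, mul_inv_cancel₀ hb₁, one_mul]
        ring
    have hterm : ∀ z : F, C z * (if -(b₁ * z + b₂) = 0 then ((Fintype.card F : ℕ):ℂ) else 0) =
        if z = z₀ then C z * ((Fintype.card F : ℕ):ℂ) else 0 := by
      intro z
      by_cases h : z = z₀
      · rw [if_pos ((hcond z).mpr h), if_pos h]
      · rw [if_neg (fun hc => h ((hcond z).mp hc)), if_neg h, mul_zero]
    rw [Finset.sum_congr rfl fun z _ => hterm z, Finset.sum_ite_eq' univ z₀]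
    rw [if_pos (mem_univ z₀), if_neg hb₁, zero_mul, add_zero]
    refine ⟨T (A₀ * G z₀), ?_⟩
    rw [hCdef]
    dsimp only
    rw [norm_mul, norm_mul, hχdef, abs_zmodChar hζ, one_mul, Complex.norm_natCast, hcard]
    simp only [hSdef, hcast]
    push_cast
    ring

open Finset in
lemma indep_lemma {p m : ℕ} [Fact p.Prime] {F : Type} [AddCommGroup F] [Module (ZMod p) F]
    (hm : 3 ≤ m) (α : Fin m → F) (hli : LinearIndependent (ZMod p) α)
    (a : Fin (m-1) → ZMod p) (ha : a ≠ 0) (t : ZMod p) :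
    t • α ⟨0, by omega⟩ +
      (∑ i : Fin (m-1), a i • α ⟨(i:ℕ)+1, by have := i.isLt; omega⟩) ≠ 0 := by
  intro heq
  set j₀ : Fin m := ⟨0, by omega⟩ with hj₀
  set c : Fin m → ZMod p := fun j => if h : (j:ℕ) = 0 then t
    else a ⟨(j:ℕ)-1, by have := j.isLt; omega⟩ with hc
  have hsum : ∑ j, c j • α j =
      t • α j₀ + ∑ i : Fin (m-1), a i • α ⟨(i:ℕ)+1, by have := i.isLt; omega⟩ := by
    have h1 : c j₀ • α j₀ = t • α j₀ := by rw [hc]; simp [hj₀]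
    have h2 : ∑ j ∈ univ.erase j₀, c j • α j =
        ∑ i : Fin (m-1), a i • α ⟨(i:ℕ)+1, by have := i.isLt; omega⟩ := by
      refine Finset.sum_bij' (fun (j : Fin m) (hj : j ∈ univ.erase j₀) =>
        (⟨(j:ℕ)-1, by have := j.isLt; omega⟩ : Fin (m-1)))
        (fun (i : Fin (m-1)) (hi : i ∈ univ) =>
        (⟨(i:ℕ)+1, by have := i.isLt; omega⟩ : Fin m)) ?_ ?_ ?_ ?_ ?_
      · intro j hj; exact mem_univ _
      · intro i hi
        refine Finset.mem_erase.mpr ⟨?_, mem_univ _⟩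
        intro hcon
        have : ((i:ℕ)+1 : ℕ) = 0 := by
          simpa [hj₀] using congrArg (fun (x : Fin m) => (x:ℕ)) hcon
        omega
      · intro j hj
        have hj0 : (j:ℕ) ≠ 0 := by
          intro h0
          exact (Finset.mem_erase.mp hj).1 (Fin.ext (by simp [hj₀, h0]))
        exact Fin.ext (show ((j:ℕ) - 1) + 1 = (j:ℕ) by omega)
      · intro i hi
        exact Fin.ext (show ((i:ℕ) + 1) - 1 = (i:ℕ) by omega)
      · intro j hj
        have hj0 : (j:ℕ) ≠ 0 := by
          intro h0
          exact (Finset.mem_erase.mp hj).1 (Fin.ext (by simp [hj₀, h0]))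
        rw [hc]
        simp only [dif_neg hj0]
        exact congrArg (fun (k : Fin m) => a ⟨(j:ℕ)-1, by have := j.isLt; omega⟩ • α k)
          (Fin.ext (show (j:ℕ) = ((j:ℕ) - 1) + 1 by omega))
    rw [← Finset.add_sum_erase univ (fun j => c j • α j) (mem_univ j₀), h1, h2]
  have hz := Fintype.linearIndependent_iff.mp hli c (hsum.trans heq)
  apply ha
  funext i
  have := hz ⟨(i:ℕ)+1, by have := i.isLt; omega⟩
  rw [hc] at this
  simp only [dif_neg (Nat.succ_ne_zero (i:ℕ))] at this
  rwa [show (⟨(i:ℕ)+1-1, by omega⟩ : Fin (m-1)) = i from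
    Fin.ext (show (i:ℕ)+1-1 = (i:ℕ) by omega)] at this

open Finset in
lemma dot_smul_left {p n : ℕ} (c : ZMod p) (b x : Fin n → ZMod p) :
    dot (c • b) x = c * dot b x := by
  unfold dot
  rw [Finset.mul_sum]
  exact Finset.sum_congr rfl fun i _ => by rw [Pi.smul_apply, smul_eq_mul, mul_assoc]

open Finset in
lemma sum_neg_dot {p : ℕ} [hp : Fact p.Prime] {η : ℂ} (hη : IsPrimitiveRoot η p) {r : ℕ}
    (b₀ : Fin r → ZMod p) (hb : b₀ ≠ 0) :
    ∑ x : Fin r → ZMod p, AddChar.zmodChar p hη.pow_eq_one (- dot b₀ x) = 0 := by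
  set χ := AddChar.zmodChar p hη.pow_eq_one with hχ
  set D : (Fin r → ZMod p) →+ ZMod p := AddMonoidHom.mk' (fun x => - dot b₀ x) (by
    intro x y
    simp only [dot, Pi.add_apply, mul_add, Finset.sum_add_distrib]
    ring) with hD
  obtain ⟨j, hj⟩ := Function.ne_iff.mp hb
  have hj' : b₀ j ≠ 0 := hj
  have hrw : ∑ x : Fin r → ZMod p, χ (- dot b₀ x) =
      ∑ x : Fin r → ZMod p, (χ.compAddMonoidHom D) x := rfl
  rw [hrw]
  refine sum_addchar_eq_zero _ (Pi.single j 1) ?_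
  have hdot : dot b₀ (Pi.single j 1) = b₀ j := by
    simp [dot, Pi.single_apply, mul_ite, Finset.sum_ite_eq']
  simp only [AddChar.compAddMonoidHom_apply, hD, AddMonoidHom.mk'_apply, hdot]
  exact zmodChar_ne_one hη (neg_ne_zero.mpr hj')

theorem stmt15 (p r m s : ℕ) [Fact (Nat.Prime p)] (hr : 1 ≤ r) (hm : 3 ≤ m) (hs : s ≤ r)
    (hprs : p = 2 → Even (r + s))
    (F : Type) [Field F] [Fintype F] [Algebra (ZMod p) F]
    (hcard : Fintype.card F = p ^ m)
    (α : Fin m → F) (hli : LinearIndependent (ZMod p) α)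
    (hspan : Submodule.span (ZMod p) (Set.range α) = ⊤)
    (f : ZMod p → (Fin r → ZMod p) → ZMod p)
    (hf : ∀ c b, ‖walshP p r (f c) b‖ = (p : ℝ) ^ (((r : ℝ) + (s : ℝ)) / 2) ∨
      walshP p r (f c) b = 0)
    (G : Equiv.Perm F) (hG0 : G 0 = 0) :
    ∀ a : Fin (m - 1) → ZMod p, a ≠ 0 →
      ((∑ i, a i) ≠ 0 →
        ∀ b : (Fin r → ZMod p) × F × F,
          ‖walshRF p r F (fun x => ∑ i : Fin (m - 1), a i *
              (f (Algebra.trace (ZMod p) F (α ⟨0, by omega⟩ * G (x.2.1 * x.2.2 ^ (p ^ m - 2)))) x.1 +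
                Algebra.trace (ZMod p) F
                  (α ⟨(i : ℕ) + 1, by have := i.isLt; omega⟩ *
                    G (x.2.1 * x.2.2 ^ (p ^ m - 2))))) b‖ =
              (p : ℝ) ^ (((r : ℝ) + 2 * (m : ℝ) + (s : ℝ)) / 2) ∨
            walshRF p r F (fun x => ∑ i : Fin (m - 1), a i *
              (f (Algebra.trace (ZMod p) F (α ⟨0, by omega⟩ * G (x.2.1 * x.2.2 ^ (p ^ m - 2)))) x.1 +
                Algebra.trace (ZMod p) F
                  (α ⟨(i : ℕ) + 1, by have := i.isLt; omega⟩ *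
                    G (x.2.1 * x.2.2 ^ (p ^ m - 2))))) b = 0) ∧
      ((∑ i, a i) = 0 →
        ∀ b : (Fin r → ZMod p) × F × F,
          ‖walshRF p r F (fun x => ∑ i : Fin (m - 1), a i *
              (f (Algebra.trace (ZMod p) F (α ⟨0, by omega⟩ * G (x.2.1 * x.2.2 ^ (p ^ m - 2)))) x.1 +
                Algebra.trace (ZMod p) F
                  (α ⟨(i : ℕ) + 1, by have := i.isLt; omega⟩ *
                    G (x.2.1 * x.2.2 ^ (p ^ m - 2))))) b‖ =
              (p : ℝ) ^ (((r : ℝ) + 2 * (m : ℝ) + (r : ℝ)) / 2) ∨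
            walshRF p r F (fun x => ∑ i : Fin (m - 1), a i *
              (f (Algebra.trace (ZMod p) F (α ⟨0, by omega⟩ * G (x.2.1 * x.2.2 ^ (p ^ m - 2)))) x.1 +
                Algebra.trace (ZMod p) F
                  (α ⟨(i : ℕ) + 1, by have := i.isLt; omega⟩ *
                    G (x.2.1 * x.2.2 ^ (p ^ m - 2))))) b = 0) := by
  intro a ha
  have hp : Fact p.Prime := inferInstance
  have hζ : IsPrimitiveRoot (zeta p) p := zeta_prim
  have hppos : (0:ℝ) < (p:ℝ) := by exact_mod_cast hp.out.pos
  set ε := ∑ i, a i with hε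
  set β : F := ∑ i : Fin (m-1), a i • α ⟨(i:ℕ)+1, by have := i.isLt; omega⟩ with hβ
  have hind : ∀ t : ZMod p, t • α ⟨0, by omega⟩ + β ≠ 0 := indep_lemma hm α hli a ha
  have hcollapse : ∀ b : (Fin r → ZMod p) × F × F,
      walshRF p r F (fun x => ∑ i : Fin (m - 1), a i *
        (f (Algebra.trace (ZMod p) F (α ⟨0, by omega⟩ * G (x.2.1 * x.2.2 ^ (p ^ m - 2)))) x.1 +
          Algebra.trace (ZMod p) F (α ⟨(i : ℕ) + 1, by have := i.isLt; omega⟩ *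
            G (x.2.1 * x.2.2 ^ (p ^ m - 2))))) b =
      ∑ x : (Fin r → ZMod p) × F × F,
        zeta p ^ ((ε * f (Algebra.trace (ZMod p) F
              (α ⟨0, by omega⟩ * G (x.2.1 * x.2.2 ^ (p ^ m - 2)))) x.1
          + Algebra.trace (ZMod p) F (β * G (x.2.1 * x.2.2 ^ (p ^ m - 2)))
          - dot b.1 x.1 - Algebra.trace (ZMod p) F (b.2.1 * x.2.1)
          - Algebra.trace (ZMod p) F (b.2.2 * x.2.2)).val) := by
    intro b
    unfold walshRF
    refine Finset.sum_congr rfl fun x _ => ?_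
    have key : ∀ u : F,
        ∑ i : Fin (m-1), a i * (f (Algebra.trace (ZMod p) F (α ⟨0, by omega⟩ * u)) x.1 +
          Algebra.trace (ZMod p) F (α ⟨(i:ℕ)+1, by have := i.isLt; omega⟩ * u)) =
        ε * f (Algebra.trace (ZMod p) F (α ⟨0, by omega⟩ * u)) x.1 +
          Algebra.trace (ZMod p) F (β * u) := by
      intro u
      simp only [mul_add]
      rw [Finset.sum_add_distrib, ← Finset.sum_mul]
      congr 1
      have h1 : ∀ i : Fin (m-1), a i * Algebra.trace (ZMod p) F
          (α ⟨(i:ℕ)+1, by have := i.isLt; omega⟩ * u) =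
          Algebra.trace (ZMod p) F ((a i • α ⟨(i:ℕ)+1, by have := i.isLt; omega⟩) * u) := by
        intro i; rw [smul_mul_assoc, map_smul, smul_eq_mul]
      rw [Finset.sum_congr rfl fun i _ => h1 i, ← map_sum, hβ, Finset.sum_mul]
    dsimp only
    rw [key (G (x.2.1 * x.2.2 ^ (p ^ m - 2)))]
  refine ⟨?_, ?_⟩
  · -- ε ≠ 0
    intro hne b
    obtain ⟨c, hmaster⟩ := master_lemma (p := p) (r := r) hm F hcard G hG0
      (fun c y => ε * f c y) (α ⟨0, by omega⟩) β hind b.1 b.2.1 b.2.2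
    have hεv : ε.val ≠ 0 := fun h => hne ((ZMod.val_eq_zero ε).mp h)
    have hcop : (ε.val).Coprime p := Nat.Coprime.symm
      ((Nat.Prime.coprime_iff_not_dvd hp.out).mpr (fun hd =>
        absurd (Nat.le_of_dvd (Nat.pos_of_ne_zero hεv) hd) (not_le.mpr (ZMod.val_lt ε))))
    have hω : IsPrimitiveRoot (zeta p ^ ε.val) p := hζ.pow_of_coprime ε.val hcop
    set b' : Fin r → ZMod p := ε⁻¹ • b.1 with hb'
    set g : (Fin r → ZMod p) → ZMod p := fun y => f c y - dot b' y with hg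
    have hSω : (∑ y : Fin r → ZMod p, zeta p ^ ((ε * f c y - dot b.1 y).val)) =
        ∑ y : Fin r → ZMod p, (zeta p ^ ε.val) ^ ((g y).val) := by
      refine Finset.sum_congr rfl fun y _ => ?_
      have hA : ε * f c y - dot b.1 y = ε * (g y) := by
        rw [hg]
        dsimp only
        rw [hb', dot_smul_left, mul_sub, ← mul_assoc, mul_inv_cancel₀ hne, one_mul]
      rw [hA, ← AddChar.zmodChar_apply (n := p) hζ.pow_eq_one, zmodChar_mul]
    rw [hSω] at hmaster
    have hwp : (∑ y : Fin r → ZMod p, zeta p ^ ((g y).val)) = walshP p r (f c) b' := rfl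
    have hP2 : ((p:ℝ) ^ (((r:ℝ)+(s:ℝ))/2))^2 = ((p ^ (r+s) : ℕ) : ℝ) := by
      rw [← Real.rpow_natCast ((p:ℝ) ^ (((r:ℝ)+(s:ℝ))/2)) 2, ← Real.rpow_mul hppos.le]
      push_cast
      rw [← Real.rpow_natCast (p:ℝ) (r+s)]
      congr 1
      push_cast
      ring
    rcases hf c b' with h | h
    · left
      have hvζ : ‖∑ y : Fin r → ZMod p, zeta p ^ ((g y).val)‖^2 =
          ((p^(r+s):ℕ):ℝ) := by
        rw [hwp, h, hP2]
      have hvω := plateau_transfer hζ hω g (p^(r+s)) hvζ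
      have habs : ‖∑ y : Fin r → ZMod p, (zeta p ^ ε.val) ^ ((g y).val)‖ =
          (p:ℝ) ^ (((r:ℝ)+(s:ℝ))/2) := by
        refine (pow_left_inj₀ (norm_nonneg _) (Real.rpow_nonneg hppos.le _)
          two_ne_zero).mp ?_
        rw [hvω, hP2]
      rw [hcollapse b, hmaster, habs, ← Real.rpow_natCast (p:ℝ) m, ← Real.rpow_add hppos]
      congr 1
      push_cast
      ring
    · right
      have hvζ : ‖∑ y : Fin r → ZMod p, zeta p ^ ((g y).val)‖^2 = ((0:ℕ):ℝ) := by
        rw [hwp, h]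
        simp
      have hvω := plateau_transfer hζ hω g 0 hvζ
      have habs0 : ‖∑ y : Fin r → ZMod p, (zeta p ^ ε.val) ^ ((g y).val)‖ = 0 := by
        have h2 := hvω
        push_cast at h2
        exact pow_eq_zero_iff two_ne_zero |>.mp h2
      rw [habs0, mul_zero] at hmaster
      rw [hcollapse b]
      exact norm_eq_zero.mp hmaster
  · -- ε = 0
    intro h0 b
    obtain ⟨c, hmaster⟩ := master_lemma (p := p) (r := r) hm F hcard G hG0
      (fun c y => ε * f c y) (α ⟨0, by omega⟩) β hind b.1 b.2.1 b.2.2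
    have hS0 : (∑ y : Fin r → ZMod p, zeta p ^ ((ε * f c y - dot b.1 y).val)) =
        ∑ y : Fin r → ZMod p, AddChar.zmodChar p hζ.pow_eq_one (- dot b.1 y) := by
      refine Finset.sum_congr rfl fun y _ => ?_
      rw [show ε * f c y - dot b.1 y = - dot b.1 y by rw [h0]; ring]
      exact (AddChar.zmodChar_apply _ _).symm
    rw [hS0] at hmaster
    by_cases hb : b.1 = 0
    · left
      have hSval : ∑ y : Fin r → ZMod p, AddChar.zmodChar p hζ.pow_eq_one (- dot b.1 y) =
          ((p^r : ℕ):ℂ) := by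
        have hz : ∀ y : Fin r → ZMod p, - dot b.1 y = 0 := by
          intro y
          rw [hb]
          simp [dot]
        simp_rw [hz, AddChar.map_zero_eq_one]
        rw [Finset.sum_const, Finset.card_univ, nsmul_eq_mul, mul_one]
        norm_cast
        rw [Fintype.card_fun, Fintype.card_fin, ZMod.card]
      rw [hcollapse b, hmaster, hSval, Complex.norm_natCast]
      have hcst : ((p^r : ℕ) : ℝ) = (p:ℝ) ^ (r:ℝ) := by
        push_cast
        exact (Real.rpow_natCast _ _).symm
      rw [hcst, ← Real.rpow_natCast (p:ℝ) m, ← Real.rpow_add hppos]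
      congr 1
      push_cast
      ring
    · right
      have hS00 := sum_neg_dot hζ b.1 hb
      rw [hS00, norm_zero, mul_zero] at hmaster
      rw [hcollapse b]
      exact norm_eq_zero.mp hmaster
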